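/- Assume v ∈ ℂ with Im v > -g, where g = 1/2 + α/β > 0 and β > 0. If φ : ℝ → ℂ is continuous with |φ(x)| ≤ a·e^{b|x|} for some a, b ≥ 0, then the integral [𝒦(v)φ](x) = ∫_{ln β}^∞ exp(-2ivy - e^{y-x}) (1+βe^{-y})^{-iv-g} (1-βe^{-y})^{-iv+g-1} φ(-y) dy converges absolutely for every x ∈ ℝ, and there exist constants A, B ≥ 0 with |[𝒦(v)φ](x)| ≤ A·e^{B|x|} for all x. -/

import Mathlib

open MeasureTheory

/-- Integrand of the reflection operator `𝒦(v)` applied to `φ`, with `g = 1/2 + α/β`. -/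
noncomputable def reflInt (α β : ℝ) (v : ℂ) (φ : ℝ → ℂ) (x y : ℝ) : ℂ :=
  Complex.exp (-2 * Complex.I * v * (y : ℂ) - Complex.exp ((y - x : ℝ) : ℂ)) *
    ((1 + β * Real.exp (-y) : ℝ) : ℂ) ^ (-Complex.I * v - ((1 / 2 + α / β : ℝ) : ℂ)) *
    ((1 - β * Real.exp (-y) : ℝ) : ℂ) ^ (-Complex.I * v + ((1 / 2 + α / β : ℝ) : ℂ) - 1) *
    φ (-y)

lemma reflInt_norm (α β : ℝ) (v : ℂ) (φ : ℝ → ℂ) (x y : ℝ)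
    (h1 : 0 < 1 + β * Real.exp (-y)) (h2 : 0 < 1 - β * Real.exp (-y)) :
    ‖reflInt α β v φ x y‖ =
      Real.exp (2 * v.im * y - Real.exp (y - x)) *
        (1 + β * Real.exp (-y)) ^ (v.im - (1 / 2 + α / β)) *
        (1 - β * Real.exp (-y)) ^ (v.im + (1 / 2 + α / β) - 1) * ‖φ (-y)‖ := by
  unfold reflInt
  rw [norm_mul, norm_mul, norm_mul,
    Complex.norm_exp, Complex.norm_cpow_eq_rpow_re_of_pos h1,
    Complex.norm_cpow_eq_rpow_re_of_pos h2]
  congr 3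
  · simp [Complex.sub_re, Complex.mul_re, Complex.mul_im, ← Complex.ofReal_sub,
      Complex.exp_ofReal_re]
  · simp
  · simp

lemma hfun_integrable (β q c' : ℝ) (hβ : 0 < β) (hq : q < 0) (hc1 : -1 < c') (hc0 : c' ≤ 0) :
    IntegrableOn (fun y => Real.exp (q * y) * (1 - β * Real.exp (-y)) ^ c')
      (Set.Ioi (Real.log β)) := by
  set L := Real.log β with hL
  have hbe : ∀ y : ℝ, β * Real.exp (-y) = Real.exp (L - y) := by
    intro y
    rw [Real.exp_sub, Real.exp_log hβ, div_eq_mul_inv, ← Real.exp_neg]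
  have hbase : ∀ y : ℝ, L < y → 0 < 1 - β * Real.exp (-y) := by
    intro y hy
    rw [hbe]
    have : Real.exp (L - y) < 1 := Real.exp_lt_one_iff.mpr (by linarith)
    linarith
  have hcont : ∀ s : Set ℝ, s ⊆ Set.Ioi L →
      ContinuousOn (fun y => Real.exp (q * y) * (1 - β * Real.exp (-y)) ^ c') s := by
    intro s hs
    apply ContinuousOn.mul
    · exact (Real.continuous_exp.comp (continuous_const.mul continuous_id)).continuousOn
    · apply ContinuousOn.rpow_const
      · exact (continuous_const.sub
          (continuous_const.mul (Real.continuous_exp.comp continuous_neg))).continuousOn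
      · intro y hy
        exact Or.inl (ne_of_gt (hbase y (hs hy)))
  rw [← Set.Ioc_union_Ioi_eq_Ioi (by linarith : L ≤ 1 + L)]
  apply IntegrableOn.union
  · have hdom : IntegrableOn
        (fun y => Real.exp (|q| * (|L| + 1)) * 2 ^ (-c') * (y - L) ^ c')
        (Set.Ioc L (1 + L)) := by
      apply Integrable.const_mul
      have h0 : IntervalIntegrable (fun t : ℝ => t ^ c') volume 0 1 :=
        intervalIntegral.intervalIntegrable_rpow' hc1
      have h1 := h0.comp_sub_right L
      rw [zero_add] at h1
      exact (intervalIntegrable_iff_integrableOn_Ioc_of_le (by linarith)).mp h1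
    apply hdom.mono'
      ((hcont _ Set.Ioc_subset_Ioi_self).aestronglyMeasurable measurableSet_Ioc)
    rw [ae_restrict_iff' measurableSet_Ioc]
    filter_upwards with y hy
    obtain ⟨hy1, hy2⟩ := hy
    have ht0 : 0 < y - L := by linarith
    have ht1 : y - L ≤ 1 := by linarith
    have hb0 := hbase y hy1
    rw [Real.norm_eq_abs, abs_of_nonneg (by positivity)]
    have e1 : Real.exp (q * y) ≤ Real.exp (|q| * (|L| + 1)) := by
      apply Real.exp_le_exp.mpr
      calc q * y ≤ |q * y| := le_abs_self _
        _ = |q| * |y| := abs_mul _ _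
        _ ≤ |q| * (|L| + 1) := by
            apply mul_le_mul_of_nonneg_left _ (abs_nonneg q)
            rcases le_or_gt 0 y with h | h
            · rw [abs_of_nonneg h]; have := neg_abs_le L; have := le_abs_self L; linarith
            · rw [abs_of_neg h]; have := neg_abs_le L; linarith
    have e2 : (1 - β * Real.exp (-y)) ^ c' ≤ 2 ^ (-c') * (y - L) ^ c' := by
      have hhalf : (y - L) / 2 ≤ 1 - β * Real.exp (-y) := by
        rw [hbe]
        set t := y - L with htdef
        have h3 : (0 : ℝ) < 1 + t := by linarith
        have hexp : Real.exp (L - y) ≤ (1 + t)⁻¹ := by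
          rw [show L - y = -t by ring, Real.exp_neg]
          exact inv_anti₀ (by linarith) (by linarith [Real.add_one_le_exp t])
        have h4 : (1 + t)⁻¹ ≤ 1 - t / 2 := by
          rw [← one_div, div_le_iff₀ h3]
          nlinarith
        linarith
      calc (1 - β * Real.exp (-y)) ^ c' ≤ ((y - L) / 2) ^ c' :=
            Real.rpow_le_rpow_of_nonpos (by positivity) hhalf hc0
        _ = 2 ^ (-c') * (y - L) ^ c' := by
            rw [Real.div_rpow ht0.le (by norm_num),
              Real.rpow_neg (by norm_num : (0:ℝ) ≤ 2)]
            ring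
    calc Real.exp (q * y) * (1 - β * Real.exp (-y)) ^ c'
        ≤ Real.exp (|q| * (|L| + 1)) * (2 ^ (-c') * (y - L) ^ c') :=
          mul_le_mul e1 e2 (Real.rpow_nonneg hb0.le _) (Real.exp_pos _).le
      _ = Real.exp (|q| * (|L| + 1)) * 2 ^ (-c') * (y - L) ^ c' := by ring
  · have hdom : IntegrableOn
        (fun y => (1 - Real.exp (-1 : ℝ)) ^ c' * Real.exp (-(-q) * y)) (Set.Ioi (1 + L)) :=
      (exp_neg_integrableOn_Ioi _ (by linarith)).const_mul _
    have hsub : Set.Ioi (1 + L) ⊆ Set.Ioi L := fun y hy => by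
      rw [Set.mem_Ioi] at hy ⊢; linarith
    apply hdom.mono' ((hcont _ hsub).aestronglyMeasurable measurableSet_Ioi)
    rw [ae_restrict_iff' measurableSet_Ioi]
    filter_upwards with y hy
    rw [Set.mem_Ioi] at hy
    have hy1 : L < y := by linarith
    have hb0 := hbase y hy1
    rw [Real.norm_eq_abs, abs_of_nonneg (by positivity), neg_neg]
    have e2 : (1 - β * Real.exp (-y)) ^ c' ≤ (1 - Real.exp (-1 : ℝ)) ^ c' := by
      apply Real.rpow_le_rpow_of_nonpos _ _ hc0
      · have : Real.exp (-1 : ℝ) < 1 := Real.exp_lt_one_iff.mpr (by norm_num)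
        linarith
      · rw [hbe]
        have : Real.exp (L - y) ≤ Real.exp (-1 : ℝ) := Real.exp_le_exp.mpr (by linarith)
        linarith
    calc Real.exp (q * y) * (1 - β * Real.exp (-y)) ^ c'
        ≤ Real.exp (q * y) * (1 - Real.exp (-1 : ℝ)) ^ c' :=
          mul_le_mul_of_nonneg_left e2 (Real.exp_pos _).le
      _ = (1 - Real.exp (-1 : ℝ)) ^ c' * Real.exp (q * y) := by ring

lemma exp_neg_exp_le (n : ℕ) (s : ℝ) :
    Real.exp (-Real.exp s) ≤ (n.factorial : ℝ) * Real.exp (-((n : ℝ) * s)) := by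
  have hfac : (0 : ℝ) < n.factorial := by positivity
  have h2 : Real.exp ((n : ℝ) * s) / (n.factorial : ℝ) ≤ Real.exp (Real.exp s) := by
    rw [Real.exp_nat_mul]
    exact Real.pow_div_factorial_le_exp (x := Real.exp s) (Real.exp_pos s).le n
  calc Real.exp (-Real.exp s) = (Real.exp (Real.exp s))⁻¹ := by rw [Real.exp_neg]
    _ ≤ (Real.exp ((n : ℝ) * s) / (n.factorial : ℝ))⁻¹ := inv_anti₀ (by positivity) h2
    _ = (n.factorial : ℝ) * Real.exp (-((n : ℝ) * s)) := by
        rw [Real.exp_neg, inv_div]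
        ring

theorem stmt16 (α β : ℝ) (v : ℂ) (hβ : 0 < β) (hg : 0 < 1 / 2 + α / β)
    (hv : -(1 / 2 + α / β) < v.im)
    (φ : ℝ → ℂ) (hφ : Continuous φ)
    (hbound : ∃ a b : ℝ, 0 ≤ a ∧ 0 ≤ b ∧ ∀ x : ℝ, ‖φ x‖ ≤ a * Real.exp (b * |x|)) :
    (∀ x : ℝ, IntegrableOn (fun y => reflInt α β v φ x y) (Set.Ioi (Real.log β))) ∧
    ∃ A B : ℝ, 0 ≤ A ∧ 0 ≤ B ∧ ∀ x : ℝ,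
      ‖∫ y in Set.Ioi (Real.log β), reflInt α β v φ x y‖ ≤ A * Real.exp (B * |x|) := by
  obtain ⟨a, b, ha, hb, hφb⟩ := hbound
  obtain ⟨n, hn⟩ := exists_nat_gt (2 * v.im + b)
  set L := Real.log β with hLdef
  have hbe : ∀ y : ℝ, β * Real.exp (-y) = Real.exp (L - y) := by
    intro y
    rw [Real.exp_sub, Real.exp_log hβ, div_eq_mul_inv, ← Real.exp_neg]
  have hpos2 : ∀ y : ℝ, y ∈ Set.Ioi L → 0 < 1 - β * Real.exp (-y) := by
    intro y hy
    rw [Set.mem_Ioi] at hy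
    rw [hbe]
    have : Real.exp (L - y) < 1 := Real.exp_lt_one_iff.mpr (by linarith)
    linarith
  have hpos1 : ∀ y : ℝ, 0 < 1 + β * Real.exp (-y) := by
    intro y; positivity
  set q : ℝ := 2 * v.im + b - n with hqdef
  have hq : q < 0 := by rw [hqdef]; linarith
  set c' : ℝ := min (v.im + (1 / 2 + α / β) - 1) 0 with hc'def
  have hc'1 : -1 < c' := lt_min (by linarith) (by norm_num)
  have hc'0 : c' ≤ 0 := min_le_right _ _
  have hInt : IntegrableOn (fun y => Real.exp (q * y) * (1 - β * Real.exp (-y)) ^ c')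
      (Set.Ioi L) := hfun_integrable β q c' hβ hq hc'1 hc'0
  set Kc : ℝ := (n.factorial : ℝ) * 2 ^ |v.im - (1 / 2 + α / β)| * a * Real.exp (2 * b * |L|)
    with hKc
  have hKc0 : 0 ≤ Kc := by
    rw [hKc]; positivity
  have key : ∀ x : ℝ, ∀ y ∈ Set.Ioi L, ‖reflInt α β v φ x y‖ ≤
      Kc * Real.exp ((n : ℝ) * x) * (Real.exp (q * y) * (1 - β * Real.exp (-y)) ^ c') := by
    intro x y hy
    have h2 := hpos2 y hy
    rw [Set.mem_Ioi] at hy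
    have h1 := hpos1 y
    have hbp : 0 < β * Real.exp (-y) := by positivity
    have hlt2 : 1 - β * Real.exp (-y) ≤ 1 := by linarith
    have hlt1 : 1 + β * Real.exp (-y) ≤ 2 := by linarith
    rw [reflInt_norm α β v φ x y h1 h2]
    have f1 : Real.exp (2 * v.im * y - Real.exp (y - x)) ≤
        Real.exp (2 * v.im * y) * ((n.factorial : ℝ) * Real.exp (-((n : ℝ) * (y - x)))) := by
      rw [sub_eq_add_neg, Real.exp_add]
      exact mul_le_mul_of_nonneg_left (exp_neg_exp_le n (y - x)) (Real.exp_pos _).le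
    have f2 : (1 + β * Real.exp (-y)) ^ (v.im - (1 / 2 + α / β)) ≤
        2 ^ |v.im - (1 / 2 + α / β)| :=
      calc (1 + β * Real.exp (-y)) ^ (v.im - (1 / 2 + α / β))
          ≤ (1 + β * Real.exp (-y)) ^ |v.im - (1 / 2 + α / β)| :=
            Real.rpow_le_rpow_of_exponent_le (by linarith) (le_abs_self _)
        _ ≤ 2 ^ |v.im - (1 / 2 + α / β)| :=
            Real.rpow_le_rpow (by linarith) hlt1 (abs_nonneg _)
    have f3 : (1 - β * Real.exp (-y)) ^ (v.im + (1 / 2 + α / β) - 1) ≤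
        (1 - β * Real.exp (-y)) ^ c' := by
      rw [hc'def]
      exact Real.rpow_le_rpow_of_exponent_ge h2 hlt2 (min_le_left _ _)
    have f4 : ‖φ (-y)‖ ≤ a * (Real.exp (2 * b * |L|) * Real.exp (b * y)) := by
      have habs : |(-y)| ≤ 2 * |L| + y := by
        rw [abs_neg]
        rcases le_or_gt 0 y with h | h
        · rw [abs_of_nonneg h]; have := abs_nonneg L; linarith
        · rw [abs_of_neg h]; have := neg_abs_le L; linarith
      calc ‖φ (-y)‖ ≤ a * Real.exp (b * |(-y)|) := hφb (-y)
        _ ≤ a * Real.exp (b * (2 * |L| + y)) := by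
            apply mul_le_mul_of_nonneg_left _ ha
            exact Real.exp_le_exp.mpr (mul_le_mul_of_nonneg_left habs hb)
        _ = a * (Real.exp (2 * b * |L|) * Real.exp (b * y)) := by
            rw [← Real.exp_add, show 2 * b * |L| + b * y = b * (2 * |L| + y) by ring]
    have hexp : Real.exp (2 * v.im * y) * Real.exp (-((n : ℝ) * (y - x))) * Real.exp (b * y)
        = Real.exp ((n : ℝ) * x) * Real.exp (q * y) := by
      rw [← Real.exp_add, ← Real.exp_add, ← Real.exp_add, hqdef]
      congr 1
      ring
    calc Real.exp (2 * v.im * y - Real.exp (y - x)) *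
          (1 + β * Real.exp (-y)) ^ (v.im - (1 / 2 + α / β)) *
          (1 - β * Real.exp (-y)) ^ (v.im + (1 / 2 + α / β) - 1) * ‖φ (-y)‖
        ≤ (Real.exp (2 * v.im * y) * ((n.factorial : ℝ) * Real.exp (-((n : ℝ) * (y - x))))) *
            (2 ^ |v.im - (1 / 2 + α / β)|) * ((1 - β * Real.exp (-y)) ^ c') *
            (a * (Real.exp (2 * b * |L|) * Real.exp (b * y))) := by
          apply mul_le_mul _ f4 (norm_nonneg _)
          · positivity
          apply mul_le_mul _ f3 (Real.rpow_nonneg h2.le _)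
          · positivity
          apply mul_le_mul f1 f2 (Real.rpow_nonneg h1.le _) (by positivity)
      _ = ((n.factorial : ℝ) * 2 ^ |v.im - (1 / 2 + α / β)| * a * Real.exp (2 * b * |L|)) *
            (Real.exp (2 * v.im * y) * Real.exp (-((n : ℝ) * (y - x))) * Real.exp (b * y)) *
            (1 - β * Real.exp (-y)) ^ c' := by ring
      _ = Kc * Real.exp ((n : ℝ) * x) * (Real.exp (q * y) * (1 - β * Real.exp (-y)) ^ c') := by
          rw [hexp, ← hKc]; ring
  have hmeas : ∀ x : ℝ, AEStronglyMeasurable (fun y => reflInt α β v φ x y)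
      (volume.restrict (Set.Ioi L)) := by
    intro x
    apply ContinuousOn.aestronglyMeasurable _ measurableSet_Ioi
    unfold reflInt
    apply ContinuousOn.mul
    apply ContinuousOn.mul
    apply ContinuousOn.mul
    · apply Continuous.continuousOn
      apply Complex.continuous_exp.comp
      apply Continuous.sub
      · exact continuous_const.mul Complex.continuous_ofReal
      · exact Complex.continuous_exp.comp
          (Complex.continuous_ofReal.comp (continuous_id.sub continuous_const))
    · apply ContinuousOn.cpow_const
      · exact (Complex.continuous_ofReal.comp (continuous_const.add
          (continuous_const.mul (Real.continuous_exp.comp continuous_neg)))).continuousOn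
      · intro y hy
        exact Complex.ofReal_mem_slitPlane.mpr (hpos1 y)
    · apply ContinuousOn.cpow_const
      · exact (Complex.continuous_ofReal.comp (continuous_const.sub
          (continuous_const.mul (Real.continuous_exp.comp continuous_neg)))).continuousOn
      · intro y hy
        exact Complex.ofReal_mem_slitPlane.mpr (hpos2 y hy)
    · exact (hφ.comp continuous_neg).continuousOn
  have hIR : ∀ x : ℝ, IntegrableOn (fun y => reflInt α β v φ x y) (Set.Ioi L) := by
    intro x
    exact Integrable.mono' (hInt.const_mul (Kc * Real.exp ((n : ℝ) * x))) (hmeas x)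
      ((ae_restrict_iff' measurableSet_Ioi).mpr (Filter.Eventually.of_forall
        (fun y hy => key x y hy)))
  have hA0 : 0 ≤ Kc * ∫ y in Set.Ioi L, Real.exp (q * y) * (1 - β * Real.exp (-y)) ^ c' := by
    apply mul_nonneg hKc0
    apply setIntegral_nonneg measurableSet_Ioi
    intro y hy
    have := hpos2 y hy
    positivity
  refine ⟨hIR, Kc * ∫ y in Set.Ioi L, Real.exp (q * y) * (1 - β * Real.exp (-y)) ^ c',
    (n : ℝ), hA0, n.cast_nonneg, ?_⟩
  intro x
  have step1 : ‖∫ y in Set.Ioi L, reflInt α β v φ x y‖ ≤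
      ∫ y in Set.Ioi L, Kc * Real.exp ((n : ℝ) * x) *
        (Real.exp (q * y) * (1 - β * Real.exp (-y)) ^ c') :=
    norm_integral_le_of_norm_le (hInt.const_mul _)
      ((ae_restrict_iff' measurableSet_Ioi).mpr (Filter.Eventually.of_forall
        (fun y hy => key x y hy)))
  rw [integral_const_mul] at step1
  calc ‖∫ y in Set.Ioi L, reflInt α β v φ x y‖
      ≤ Kc * Real.exp ((n : ℝ) * x) *
          ∫ y in Set.Ioi L, Real.exp (q * y) * (1 - β * Real.exp (-y)) ^ c' := step1
    _ = (Kc * ∫ y in Set.Ioi L, Real.exp (q * y) * (1 - β * Real.exp (-y)) ^ c') *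
          Real.exp ((n : ℝ) * x) := by ring
    _ ≤ (Kc * ∫ y in Set.Ioi L, Real.exp (q * y) * (1 - β * Real.exp (-y)) ^ c') *
          Real.exp ((n : ℝ) * |x|) := by
        apply mul_le_mul_of_nonneg_left _ hA0
        exact Real.exp_le_exp.mpr (mul_le_mul_of_nonneg_left (le_abs_self x) n.cast_nonneg)
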